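/- Let A⁽¹⁾, …, A⁽ᵍ⁾ be measurements on ℂ^d all of whose effects are nonzero, let ρ ∈ Matrix (Fin d) (Fin d) ℂ be positive definite with trace 1, and let B be a joint measurement with m outcomes, i.e., A⁽ⁱ⁾ ⪯ B for every i. Then (m : ℝ) ≥ 𝔥(F_ρ(A⁽¹⁾), …, F_ρ(A⁽ᵍ⁾)), where 𝔥 is the height of the family of d² × d² matrices F_ρ(A⁽ⁱ⁾). -/

import Mathlib

open Matrix
open scoped Kronecker ComplexOrder

noncomputable section

/-- A measurement (POVM): a finite family of positive semidefinite matrices summing to `1`. -/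
def IsMeasurement {ι κ : Type*} [Fintype ι] [DecidableEq ι] [Fintype κ]
    (A : κ → Matrix ι ι ℂ) : Prop :=
  (∀ x, (A x).PosSemidef) ∧ ∑ x, A x = 1

/-- `A` is a post-processing of `B`: `A ⪯ B`. -/
def PostProc {ι : Type*} {n m : ℕ}
    (A : Fin n → Matrix ι ι ℂ) (B : Fin m → Matrix ι ι ℂ) : Prop :=
  ∃ μ : Fin n → Fin m → ℝ,
    (∀ x y, 0 ≤ μ x y) ∧ (∀ y, ∑ x, μ x y = 1) ∧
    (∀ x, A x = ∑ y, (μ x y : ℂ) • B y)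

/-- The outer product `|E⟩⟨F|` of the vectorizations of two matrices. -/
def outerProd {ι : Type*} (E F : Matrix ι ι ℂ) : Matrix (ι × ι) (ι × ι) ℂ :=
  Matrix.of fun p q => E p.1 p.2 * star (F q.1 q.2)

/-- The (un-normalized) Fisher information map of a measurement. -/
noncomputable def Fisher {ι κ : Type*} [Fintype ι] [Fintype κ]
    (A : κ → Matrix ι ι ℂ) : Matrix (ι × ι) (ι × ι) ℂ :=
  ∑ x, (Matrix.trace (A x))⁻¹ • outerProd (A x) (A x)

/-- The positive semidefinite square root of a positive semidefinite matrix (the definition of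
`Matrix.PosSemidef.sqrt` in the older Mathlib, since removed). -/
noncomputable def psdSqrt {ι : Type*} [Fintype ι] [DecidableEq ι] {A : Matrix ι ι ℂ}
    (hA : A.PosSemidef) : Matrix ι ι ℂ :=
  (hA.1.eigenvectorUnitary : Matrix ι ι ℂ) *
    diagonal ((↑) ∘ (Real.sqrt ·) ∘ hA.1.eigenvalues) *
    (star hA.1.eigenvectorUnitary : Matrix ι ι ℂ)

/-- The generalized Fisher information map of a measurement, relative to a
positive definite state `ρ` (with positive semidefinite square root `ρ^{1/2}`). -/
noncomputable def FisherRho {ι κ : Type*} [Fintype ι] [DecidableEq ι] [Fintype κ]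
    {ρ : Matrix ι ι ℂ} (hρ : ρ.PosDef) (A : κ → Matrix ι ι ℂ) :
    Matrix (ι × ι) (ι × ι) ℂ :=
  ∑ x, (Matrix.trace (ρ * A x))⁻¹ •
    outerProd (psdSqrt hρ.posSemidef * A x) (psdSqrt hρ.posSemidef * A x)

/-- The height of a finite family of self-adjoint matrices: the infimum of the traces of
Hermitian matrices dominating every member in the Loewner order. -/
noncomputable def height {ι κ : Type*} [Fintype ι] [Fintype κ]
    (X : κ → Matrix ι ι ℂ) : ℝ :=
  sInf { t : ℝ | ∃ H : Matrix ι ι ℂ, H.IsHermitian ∧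
    (∀ i, (H - X i).PosSemidef) ∧ t = (Matrix.trace H).re }

/-! ### Auxiliary lemmas -/

section Aux

variable {ι : Type*} [Fintype ι] [DecidableEq ι]

lemma psdSqrt_herm {A : Matrix ι ι ℂ} (hA : A.PosSemidef) : (psdSqrt hA)ᴴ = psdSqrt hA := by
  unfold psdSqrt
  have hd : star (((↑) : ℝ → ℂ) ∘ (Real.sqrt ·) ∘ hA.1.eigenvalues)
      = ((↑) : ℝ → ℂ) ∘ (Real.sqrt ·) ∘ hA.1.eigenvalues := by
    funext i; simp
  rw [conjTranspose_mul, conjTranspose_mul, diagonal_conjTranspose, hd,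
    ← star_eq_conjTranspose, ← star_eq_conjTranspose, star_star, Matrix.mul_assoc]

lemma psdSqrt_mul_self {A : Matrix ι ι ℂ} (hA : A.PosSemidef) : psdSqrt hA * psdSqrt hA = A := by
  unfold psdSqrt
  have hU : (star hA.1.eigenvectorUnitary : Matrix ι ι ℂ) * (hA.1.eigenvectorUnitary : Matrix ι ι ℂ)
      = 1 := Unitary.coe_star_mul_self _
  have hD : diagonal (((↑) : ℝ → ℂ) ∘ (Real.sqrt ·) ∘ hA.1.eigenvalues) *
      diagonal (((↑) : ℝ → ℂ) ∘ (Real.sqrt ·) ∘ hA.1.eigenvalues)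
      = diagonal (((↑) : ℝ → ℂ) ∘ hA.1.eigenvalues) := by
    rw [diagonal_mul_diagonal]; congr 1; ext i
    simp only [Function.comp_apply, ← Complex.ofReal_mul, Real.mul_self_sqrt (hA.eigenvalues_nonneg i)]
  conv_rhs => rw [hA.1.spectral_theorem]
  rw [Unitary.conjStarAlgAut_apply]
  simp only [Matrix.mul_assoc]
  rw [← Matrix.mul_assoc (star _ : Matrix ι ι ℂ) _ _, hU, Matrix.one_mul, ← Matrix.mul_assoc _ _ (star _ : Matrix ι ι ℂ), hD]
  rfl

/-- The pairing of a vector with the vectorization of a matrix. -/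
noncomputable def Lf (v : ι × ι → ℂ) (E : Matrix ι ι ℂ) : ℂ :=
  ∑ p, star (v p) * E p.1 p.2

omit [DecidableEq ι] in
lemma qform_outer (v : ι × ι → ℂ) (E : Matrix ι ι ℂ) :
    star v ⬝ᵥ (outerProd E E *ᵥ v) = (Complex.normSq (Lf v E) : ℂ) := by
  have : star v ⬝ᵥ (outerProd E E *ᵥ v) = Lf v E * star (Lf v E) := by
    simp only [outerProd, mulVec, dotProduct, Lf, of_apply, Pi.star_apply, star_sum]
    rw [Finset.sum_mul_sum]
    refine Finset.sum_congr rfl fun p _ => ?_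
    rw [Finset.mul_sum]
    refine Finset.sum_congr rfl fun q _ => ?_
    rw [StarMul.star_mul, star_star]
    ring
  rw [this, Complex.star_def, Complex.mul_conj']
  exact_mod_cast congrArg Complex.ofReal (Complex.sq_norm _)

omit [Fintype ι] [DecidableEq ι] in
lemma outer_herm (E : Matrix ι ι ℂ) (c : ℝ) : ((c : ℂ) • outerProd E E).IsHermitian := by
  unfold Matrix.IsHermitian
  ext p q
  simp [outerProd, conjTranspose_apply, mul_comm, Complex.conj_ofReal]

omit [DecidableEq ι] in
lemma Lf_sum {κ : Type*} [Fintype κ] (v : ι × ι → ℂ) (s : Matrix ι ι ℂ)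
    (μ : κ → ℝ) (Bm : κ → Matrix ι ι ℂ) :
    Lf v (s * ∑ y, (μ y : ℂ) • Bm y) = ∑ y, (μ y : ℂ) * Lf v (s * Bm y) := by
  simp only [Matrix.mul_sum, Matrix.mul_smul, Lf, Finset.sum_apply, Matrix.sum_apply,
    Matrix.smul_apply, smul_eq_mul, Finset.mul_sum]
  rw [Finset.sum_comm]
  refine Finset.sum_congr rfl fun y _ => Finset.sum_congr rfl fun p _ => by ring

omit [DecidableEq ι] in
lemma psd_trace_nonneg {N : Matrix ι ι ℂ} (hN : N.PosSemidef) : 0 ≤ N.trace := by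
  classical
  refine Finset.sum_nonneg fun j _ => ?_
  simpa [mulVec_single, dotProduct, Pi.single_apply, apply_ite] using hN.dotProduct_mulVec_nonneg (Pi.single j 1)

/-- The trace `tr(ρ M)` is a nonnegative real, positive if `M ≠ 0`. -/
lemma traceRho {ρ M : Matrix ι ι ℂ} (hρ : ρ.PosDef) (hM : M.PosSemidef) :
    ∃ T : ℝ, 0 ≤ T ∧ (ρ * M).trace = (T : ℂ) ∧ (M ≠ 0 → 0 < T) := by
  obtain ⟨C, hC⟩ : ∃ C : Matrix ι ι ℂ, M = Cᴴ * C :=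
    ⟨psdSqrt hM, by rw [psdSqrt_herm, psdSqrt_mul_self]⟩
  have hNpsd : (C * ρ * Cᴴ).PosSemidef := hρ.posSemidef.mul_mul_conjTranspose_same C
  have htr : (ρ * M).trace = (C * ρ * Cᴴ).trace := by
    rw [hC, ← Matrix.mul_assoc, Matrix.trace_mul_comm, Matrix.mul_assoc, ← Matrix.mul_assoc]
  have h0 : 0 ≤ (ρ * M).trace := htr ▸ psd_trace_nonneg hNpsd
  have him : (ρ * M).trace.im = 0 := by
    have := (Complex.le_def.mp h0).2; simpa using this.symm
  have hre : 0 ≤ (ρ * M).trace.re := (Complex.le_def.mp h0).1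
  refine ⟨(ρ * M).trace.re, hre, by
    apply Complex.ext <;> simp [him], fun hM0 => ?_⟩
  rcases hre.lt_or_eq with h | h
  · exact h
  exfalso
  have htr0 : (C * ρ * Cᴴ).trace = 0 := by
    rw [← htr]; apply Complex.ext <;> simp [him, ← h]
  have hdiag : ∀ j, (C * ρ * Cᴴ) j j = 0 := by
    have hnn : ∀ j ∈ Finset.univ, 0 ≤ (C * ρ * Cᴴ) j j := fun j _ => by
      simpa [mulVec_single, dotProduct, Pi.single_apply, apply_ite] using
        hNpsd.dotProduct_mulVec_nonneg (Pi.single j 1)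
    intro j
    exact (Finset.sum_eq_zero_iff_of_nonneg hnn).mp htr0 j (Finset.mem_univ j)
  have hC0 : C ≠ 0 := by
    rintro rfl; exact hM0 (by simp [hC])
  obtain ⟨i, j, hij⟩ : ∃ i j, C i j ≠ 0 := by
    by_contra h'
    push_neg at h'
    exact hC0 (by ext i j; simp [h' i j])
  set u : ι → ℂ := Cᴴ *ᵥ Pi.single i 1 with hu
  have hu0 : u ≠ 0 := by
    intro h'
    have : u j = 0 := by rw [h']; rfl
    rw [hu] at this
    simp [mulVec_single, conjTranspose_apply] at this
    exact hij this
  have hpos := hρ.dotProduct_mulVec_pos hu0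
  have : star (Pi.single i (1:ℂ)) ⬝ᵥ (C * ρ * Cᴴ) *ᵥ Pi.single i 1
      = star u ⬝ᵥ ρ *ᵥ u := by
    simp only [star_mulVec, dotProduct_mulVec, vecMul_vecMul, conjTranspose_conjTranspose, hu]
  rw [show star (Pi.single i (1:ℂ)) ⬝ᵥ (C * ρ * Cᴴ) *ᵥ Pi.single i 1 = (C * ρ * Cᴴ) i i by
    simp [mulVec_single, dotProduct, Pi.single_apply, apply_ite]] at this
  rw [hdiag i] at this
  exact lt_irrefl _ (this ▸ hpos)

omit [DecidableEq ι] in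
lemma psd_sum {κ : Type*} {s : Finset κ} {f : κ → Matrix ι ι ℂ}
    (h : ∀ x ∈ s, (f x).PosSemidef) : (∑ x ∈ s, f x).PosSemidef :=
  Finset.sum_induction f _ (fun _ _ ha hb => ha.add hb) .zero h

omit [DecidableEq ι] in
lemma qform_sum {κ : Type*} [Fintype κ] (M : κ → Matrix (ι × ι) (ι × ι) ℂ)
    (v : ι × ι → ℂ) :
    star v ⬝ᵥ ((∑ x, M x) *ᵥ v) = ∑ x, star v ⬝ᵥ (M x *ᵥ v) := by
  simp only [mulVec, dotProduct, Matrix.sum_apply, Finset.sum_mul, Finset.mul_sum]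
  exact (Finset.sum_congr rfl fun p _ => Finset.sum_comm).trans Finset.sum_comm

/-- The quadratic form of the generalized Fisher information. -/
lemma qform_fisherRho {κ : Type*} [Fintype κ] {ρ : Matrix ι ι ℂ} (hρ : ρ.PosDef)
    (A : κ → Matrix ι ι ℂ) (v : ι × ι → ℂ) :
    star v ⬝ᵥ (FisherRho hρ A *ᵥ v) =
      ∑ x, (Matrix.trace (ρ * A x))⁻¹ *
        (Complex.normSq (Lf v (psdSqrt hρ.posSemidef * A x)) : ℂ) := by
  unfold FisherRho
  rw [qform_sum]
  refine Finset.sum_congr rfl fun x _ => ?_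
  rw [smul_mulVec, dotProduct_smul, smul_eq_mul, qform_outer]

/-- Hermitianness of the generalized Fisher information. -/
lemma herm_fisherRho {κ : Type*} [Fintype κ] {ρ : Matrix ι ι ℂ} (hρ : ρ.PosDef)
    (A : κ → Matrix ι ι ℂ) (hA : ∀ x, (A x).PosSemidef) :
    (FisherRho hρ A).IsHermitian := by
  have hterm : ∀ x, ((Matrix.trace (ρ * A x))⁻¹ •
      outerProd (psdSqrt hρ.posSemidef * A x) (psdSqrt hρ.posSemidef * A x)).IsHermitian := by
    intro x
    obtain ⟨T, _, htr, _⟩ := traceRho hρ (hA x)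
    rw [htr, ← Complex.ofReal_inv]
    exact outer_herm _ _
  show (∑ x, _)ᴴ = _
  rw [conjTranspose_sum]
  exact Finset.sum_congr rfl fun x _ => hterm x

omit [DecidableEq ι] in
lemma trace_outer (E : Matrix ι ι ℂ) :
    (outerProd E E).trace = ((∑ p : ι × ι, Complex.normSq (E p.1 p.2) : ℝ) : ℂ) := by
  unfold Matrix.trace outerProd
  push_cast
  refine Finset.sum_congr rfl fun p _ => ?_
  simp only [diag_apply, of_apply]
  rw [Complex.star_def, Complex.mul_conj']
  exact_mod_cast congrArg Complex.ofReal (Complex.sq_norm _)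

lemma normSq_eq_trace {ρ : Matrix ι ι ℂ} (hρ : ρ.PosDef) {Bm : Matrix ι ι ℂ}
    (hBm : Bm.IsHermitian) :
    ((∑ p : ι × ι, Complex.normSq ((psdSqrt hρ.posSemidef * Bm) p.1 p.2) : ℝ) : ℂ)
      = (ρ * (Bm * Bm)).trace := by
  set s := psdSqrt hρ.posSemidef with hs
  have hsherm : sᴴ = s := psdSqrt_herm hρ.posSemidef
  have hss : s * s = ρ := psdSqrt_mul_self hρ.posSemidef
  have h1 : ((∑ p : ι × ι, Complex.normSq ((s * Bm) p.1 p.2) : ℝ) : ℂ)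
      = ((s * Bm) * (s * Bm)ᴴ).trace := by
    unfold Matrix.trace
    push_cast
    rw [Fintype.sum_prod_type]
    refine Finset.sum_congr rfl fun i _ => ?_
    simp only [diag_apply, Matrix.mul_apply, conjTranspose_apply]
    refine Finset.sum_congr rfl fun j _ => ?_
    rw [Complex.star_def, Complex.mul_conj']
    exact_mod_cast congrArg Complex.ofReal (Complex.sq_norm _).symm
  rw [h1, conjTranspose_mul, hsherm, hBm.eq]
  rw [show s * Bm * (Bm * s) = s * (Bm * Bm * s) by simp only [Matrix.mul_assoc]]
  rw [Matrix.trace_mul_comm, Matrix.mul_assoc, hss, Matrix.trace_mul_comm]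

/-- Each effect `B y` satisfies `B y ≤ 1`, hence `B y * B y ≤ B y`. -/
lemma sq_le_self_of_measurement {κ : Type*} [Fintype κ] [DecidableEq κ]
    {B : κ → Matrix ι ι ℂ} (hB : IsMeasurement B) (y : κ) :
    (B y - B y * B y).PosSemidef := by
  have hpsd := hB.1 y
  have hone : (1 - B y : Matrix ι ι ℂ) = ∑ x ∈ Finset.univ.erase y, B x := by
    have := Finset.sum_erase_add Finset.univ B (Finset.mem_univ y)
    rw [hB.2] at this
    linear_combination (norm := module) -this
  have honepsd : (1 - B y : Matrix ι ι ℂ).PosSemidef := by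
    rw [hone]; exact psd_sum fun x _ => hB.1 x
  set q := psdSqrt hpsd with hqdef
  have hqherm : qᴴ = q := psdSqrt_herm hpsd
  have hq : q * q = B y := psdSqrt_mul_self hpsd
  have key : q * (1 - B y) * q = B y - B y * B y := by
    rw [Matrix.mul_sub, Matrix.mul_one, Matrix.sub_mul, ← hq]
    simp only [Matrix.mul_assoc]
  have := honepsd.mul_mul_conjTranspose_same q
  rw [hqherm, key] at this
  exact this

/-- The (real) trace of the generalized Fisher information is at most the number of outcomes. -/
lemma trace_fisherRho_le {κ : Type*} [Fintype κ] [DecidableEq κ] {ρ : Matrix ι ι ℂ}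
    (hρ : ρ.PosDef) (B : κ → Matrix ι ι ℂ) (hB : IsMeasurement B) :
    (FisherRho hρ B).trace.re ≤ Fintype.card κ := by
  unfold FisherRho
  rw [Matrix.trace_sum]
  rw [Complex.re_sum]
  have hbound : ∀ y : κ, (((Matrix.trace (ρ * B y))⁻¹ •
      outerProd (psdSqrt hρ.posSemidef * B y) (psdSqrt hρ.posSemidef * B y)).trace).re ≤ 1 := by
    intro y
    rw [Matrix.trace_smul, trace_outer, smul_eq_mul]
    by_cases hy : B y = 0
    · simp [hy]
    · obtain ⟨T, hT0, htr, hTpos⟩ := traceRho hρ (hB.1 y)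
      have hTpos' : 0 < T := hTpos hy
      set N : ℝ := ∑ p : ι × ι, Complex.normSq ((psdSqrt hρ.posSemidef * B y) p.1 p.2) with hN
      have hN0 : 0 ≤ N := Finset.sum_nonneg fun p _ => Complex.normSq_nonneg _
      -- N ≤ T
      have hsplit : (ρ * B y).trace = (ρ * (B y * B y)).trace + (ρ * (B y - B y * B y)).trace := by
        rw [← Matrix.trace_add, ← Matrix.mul_add]
        congr 1
        rw [add_sub_cancel]
      obtain ⟨T', hT'0, htr', _⟩ := traceRho hρ (sq_le_self_of_measurement hB y)
      have hNeq : ((N : ℝ) : ℂ) = (ρ * (B y * B y)).trace := normSq_eq_trace hρ (hB.1 y).1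
      have hTN : T = N + T' := by
        have : ((T : ℝ) : ℂ) = ((N : ℝ) : ℂ) + ((T' : ℝ) : ℂ) := by
          rw [← htr, ← htr', hNeq, hsplit]
        exact_mod_cast this
      have hNT : N ≤ T := by rw [hTN]; linarith
      rw [htr, ← Complex.ofReal_inv, ← Complex.ofReal_mul, Complex.ofReal_re]
      rw [inv_mul_le_iff₀ hTpos', mul_one]
      exact hNT
  calc ∑ y : κ, _ ≤ ∑ _y : κ, (1:ℝ) := Finset.sum_le_sum fun y _ => hbound y
    _ = Fintype.card κ := by simp

/-- Monotonicity of the generalized Fisher information under post-processing. -/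
lemma fisher_mono {n m : ℕ} {ρ : Matrix ι ι ℂ} (hρ : ρ.PosDef)
    {A : Fin n → Matrix ι ι ℂ} {B : Fin m → Matrix ι ι ℂ}
    (hA : IsMeasurement A) (hB : IsMeasurement B) (hA0 : ∀ x, A x ≠ 0)
    (hAB : PostProc A B) :
    (FisherRho hρ B - FisherRho hρ A).PosSemidef := by
  obtain ⟨μ, hμ0, hμ1, hABx⟩ := hAB
  refine Matrix.PosSemidef.of_dotProduct_mulVec_nonneg ?_ ?_
  · exact (herm_fisherRho hρ B hB.1).sub (herm_fisherRho hρ A hA.1)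
  intro v
  rw [sub_mulVec, dotProduct_sub, qform_fisherRho, qform_fisherRho]
  set s := psdSqrt hρ.posSemidef with hs
  choose T hT0 hTtr hTpos using fun y : Fin m => traceRho hρ (hB.1 y)
  choose S hS0 hStr hSpos using fun x : Fin n => traceRho hρ (hA.1 x)
  have hSpos' : ∀ x, 0 < S x := fun x => hSpos x (hA0 x)
  set L : Fin m → ℂ := fun y => Lf v (s * B y) with hL
  set K : Fin n → ℂ := fun x => Lf v (s * A x) with hK
  have hKsum : ∀ x, K x = ∑ y, (μ x y : ℂ) * L y := by
    intro x
    show Lf v (s * A x) = _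
    rw [hABx x, Lf_sum]
  -- the effective outcome probabilities of `A`
  have hSsum : ∀ x, S x = ∑ y, μ x y * T y := by
    intro x
    have h1 : (ρ * A x).trace = ((∑ y, μ x y * T y : ℝ) : ℂ) := by
      rw [hABx x, Matrix.mul_sum]
      rw [Matrix.trace_sum]
      push_cast
      refine Finset.sum_congr rfl fun y _ => ?_
      rw [Matrix.mul_smul, Matrix.trace_smul, smul_eq_mul, hTtr y]
    have := (hStr x).symm.trans h1
    exact_mod_cast this
  -- if an effect is trivial, its pairing vanishes
  have hLzero : ∀ y, T y = 0 → L y = 0 := by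
    intro y hTy
    have hBy : B y = 0 := by
      by_contra hBy
      exact absurd hTy (ne_of_gt (hTpos y hBy))
    simp [hL, hBy, Lf]
  -- rewrite the two quadratic forms as real numbers
  have hQB : ∑ y, (Matrix.trace (ρ * B y))⁻¹ * (Complex.normSq (L y) : ℂ)
      = ((∑ y, (T y)⁻¹ * Complex.normSq (L y) : ℝ) : ℂ) := by
    push_cast
    refine Finset.sum_congr rfl fun y _ => ?_
    rw [hTtr y, ← Complex.ofReal_inv]
  have hQA : ∑ x, (Matrix.trace (ρ * A x))⁻¹ * (Complex.normSq (K x) : ℂ)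
      = ((∑ x, (S x)⁻¹ * Complex.normSq (K x) : ℝ) : ℂ) := by
    push_cast
    refine Finset.sum_congr rfl fun x _ => ?_
    rw [hStr x, ← Complex.ofReal_inv]
  rw [hQB, hQA, ← Complex.ofReal_sub, Complex.zero_le_real, sub_nonneg]
  -- the key real inequality, via Cauchy–Schwarz
  have hkey : ∀ x, (S x)⁻¹ * Complex.normSq (K x)
      ≤ ∑ y, μ x y * ((T y)⁻¹ * Complex.normSq (L y)) := by
    intro x
    rw [inv_mul_le_iff₀ (hSpos' x)]
    have hcs := Finset.sum_sq_le_sum_mul_sum_of_sq_eq_mul Finset.univ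
      (r := fun y => μ x y * ‖L y‖)
      (f := fun y => μ x y * T y)
      (g := fun y => μ x y * ((T y)⁻¹ * Complex.normSq (L y)))
      (fun y _ => mul_nonneg (hμ0 x y) (hT0 y))
      (fun y _ => mul_nonneg (hμ0 x y)
        (mul_nonneg (inv_nonneg.mpr (hT0 y)) (Complex.normSq_nonneg _)))
      (fun y _ => by
        by_cases hTy : T y = 0
        · simp [hTy, hLzero y hTy]
        · have : Complex.normSq (L y) = ‖L y‖ ^ 2 := (Complex.sq_norm _).symm
          field_simp [this]
          rw [this])
    have habs : ‖K x‖ ≤ ∑ y, μ x y * ‖L y‖ := by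
      rw [hKsum x]
      refine (norm_sum_le _ _).trans ?_
      refine le_of_eq (Finset.sum_congr rfl fun y _ => ?_)
      rw [norm_mul, Complex.norm_real, Real.norm_eq_abs, abs_of_nonneg (hμ0 x y)]
    have h1 : Complex.normSq (K x) ≤ (∑ y, μ x y * ‖L y‖) ^ 2 := by
      rw [← Complex.sq_norm]
      exact pow_le_pow_left₀ (norm_nonneg _) habs 2
    calc Complex.normSq (K x) ≤ (∑ y, μ x y * ‖L y‖) ^ 2 := h1
      _ ≤ (∑ y, μ x y * T y) * ∑ y, μ x y * ((T y)⁻¹ * Complex.normSq (L y)) := hcs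
      _ = S x * ∑ y, μ x y * ((T y)⁻¹ * Complex.normSq (L y)) := by rw [← hSsum x]
  calc ∑ x, (S x)⁻¹ * Complex.normSq (K x)
      ≤ ∑ x, ∑ y, μ x y * ((T y)⁻¹ * Complex.normSq (L y)) :=
        Finset.sum_le_sum fun x _ => hkey x
    _ = ∑ y, (∑ x, μ x y) * ((T y)⁻¹ * Complex.normSq (L y)) := by
        rw [Finset.sum_comm]
        exact Finset.sum_congr rfl fun y _ => by rw [Finset.sum_mul]
    _ = ∑ y, (T y)⁻¹ * Complex.normSq (L y) := by
        refine Finset.sum_congr rfl fun y _ => ?_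
        rw [hμ1 y, one_mul]

end Aux

/-- A lower bound on the number of outcomes of any joint measurement. -/
theorem stmt19 {d g m : ℕ} (n : Fin g → ℕ)
    (A : (i : Fin g) → Fin (n i) → Matrix (Fin d) (Fin d) ℂ)
    (hA : ∀ i, IsMeasurement (A i)) (hA0 : ∀ i x, A i x ≠ 0)
    {ρ : Matrix (Fin d) (Fin d) ℂ} (hρ : ρ.PosDef) (hρtr : Matrix.trace ρ = 1)
    (B : Fin m → Matrix (Fin d) (Fin d) ℂ) (hB : IsMeasurement B)
    (hjoint : ∀ i, PostProc (A i) B) :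
    height (fun i => FisherRho hρ (A i)) ≤ (m : ℝ) := by
  classical
  set Sset : Set ℝ := { t : ℝ | ∃ H : Matrix (Fin d × Fin d) (Fin d × Fin d) ℂ, H.IsHermitian ∧
    (∀ i, (H - FisherRho hρ (A i)).PosSemidef) ∧ t = (Matrix.trace H).re } with hSset
  have hmem : (Matrix.trace (FisherRho hρ B)).re ∈ Sset := by
    refine ⟨FisherRho hρ B, herm_fisherRho hρ B hB.1, fun i => ?_, rfl⟩
    exact fisher_mono hρ (hA i) hB (hA0 i) (hjoint i)
  have hle : (Matrix.trace (FisherRho hρ B)).re ≤ (m : ℝ) := by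
    have := trace_fisherRho_le hρ B hB
    simpa using this
  show sInf Sset ≤ (m : ℝ)
  by_cases hbdd : BddBelow Sset
  · exact le_trans (csInf_le hbdd hmem) hle
  · rw [Real.sInf_of_not_bddBelow hbdd]
    positivity
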